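/- Let d : ℝ^q → ℝ be concave and differentiable, and suppose x̄(u) is a point with d(u) = f(x̄(u)) + uᵀ∇d(u) where f(x̄(u)) denotes the primal objective value. Suppose the Lagrangian saddle point property holds: L(x⋆, u) ≤ d⋆ for all dual feasible u, where x⋆ is the primal optimum, f⋆ = d⋆, and L(·,u) is strongly convex on X with parameter θ. Then for every dual feasible u, ‖x̄(u) − x⋆‖ ≤ √(2(d⋆ − d(u))/θ). -/
import Mathlib


open scoped RealInnerProductSpace

/-- Primal error bound via dual suboptimality: if `L(·,u)` is strongly convex on `X`
with parameter `θ`, `x̄(u)` minimizes `L(·,u)` over `X` with `d(u) = L(x̄(u),u)`,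
and the saddle point property `L(x⋆,u) ≤ d⋆` holds for all dual feasible `u`, then
`‖x̄(u) − x⋆‖ ≤ √(2(d⋆ − d(u))/θ)`. -/
theorem primal_distance_bound {n q : ℕ}
    (X : Set (EuclideanSpace ℝ (Fin n))) (D : Set (EuclideanSpace ℝ (Fin q)))
    (L : EuclideanSpace ℝ (Fin n) → EuclideanSpace ℝ (Fin q) → ℝ)
    (d : EuclideanSpace ℝ (Fin q) → ℝ)
    (θ dstar : ℝ) (hθ : 0 < θ)
    (xbar : EuclideanSpace ℝ (Fin q) → EuclideanSpace ℝ (Fin n))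
    (xstar : EuclideanSpace ℝ (Fin n)) (hxstar : xstar ∈ X)
    (G : EuclideanSpace ℝ (Fin q) → EuclideanSpace ℝ (Fin n) → Set (EuclideanSpace ℝ (Fin n)))
    -- `G u x` consists of subgradients of `L(·,u)` at `x`
    (hG : ∀ u ∈ D, ∀ x ∈ X, ∀ g ∈ G u x, ∀ y, L x u + ⟪g, y - x⟫ ≤ L y u)
    -- strong convexity of `L(·,u)` on `X` with parameter `θ`
    (hsc : ∀ u ∈ D, ∀ x ∈ X, ∀ y ∈ X, ∀ g ∈ G u x,
      L y u - L x u - ⟪g, y - x⟫ ≥ θ / 2 * ‖x - y‖ ^ 2)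
    (hxbarX : ∀ u ∈ D, xbar u ∈ X)
    -- `x̄(u)` minimizes `L(·,u)` over `X`, with first-order optimality
    (hmin : ∀ u ∈ D, ∀ x ∈ X, L (xbar u) u ≤ L x u)
    (hfoc : ∀ u ∈ D, ∃ g ∈ G u (xbar u), ∀ x ∈ X, 0 ≤ ⟪g, x - xbar u⟫)
    -- `d(u) = L(x̄(u), u)`
    (hd : ∀ u ∈ D, d u = L (xbar u) u)
    -- saddle point property `L(x⋆, u) ≤ d⋆` for dual feasible `u`
    (hsaddle : ∀ u ∈ D, L xstar u ≤ dstar) :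
    ∀ u ∈ D, ‖xbar u - xstar‖ ≤ Real.sqrt (2 * (dstar - d u) / θ) := by
  intro u hu
  obtain ⟨g, hgG, hg⟩ := hfoc u hu
  have hsc' := hsc u hu (xbar u) (hxbarX u hu) xstar hxstar g hgG
  have hge := hg xstar hxstar
  have key : θ / 2 * ‖xbar u - xstar‖ ^ 2 ≤ dstar - d u := by
    have := hsaddle u hu
    have hdu := hd u hu
    nlinarith [hsc', hge]
  have h2 : ‖xbar u - xstar‖ ^ 2 ≤ 2 * (dstar - d u) / θ := by
    rw [le_div_iff₀ hθ]
    nlinarith [key]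
  calc ‖xbar u - xstar‖ = Real.sqrt (‖xbar u - xstar‖ ^ 2) := by
        rw [Real.sqrt_sq (norm_nonneg _)]
    _ ≤ Real.sqrt (2 * (dstar - d u) / θ) := Real.sqrt_le_sqrt h2
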